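/- Let a < b < c be real numbers, and let D = (d, d') be a point with c < d (in particular d ≠ a and d ≠ c). Then (c² − d')/(c − d) − (a² − d')/(a − d) = c − a holds if and only if d' = d². That is, the quadrilateral with vertices A = (a,a²), B = (b,b²), C = (c,c²), D = (d,d') has opposite difference angles summing to zero if and only if it is inscribed in the parabola y = x² (whose axis is parallel to the vertical projective direction). -/
import Mathlib


/-- Characterization of parabolically inscribed quadrilaterals: for `a < b < c < d`
and `D = (d, d')`, the opposite difference angles of `A, B, C, D` sum to zero,
i.e. `(c² − d')/(c − d) − (a² − d')/(a − d) = c − a`, iff `d' = d²`, i.e. iff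
the quadrilateral is inscribed in the parabola `y = x²`. -/
theorem parabolic_quadrilateral_characterization (a b c d d' : ℝ)
    (hab : a < b) (hbc : b < c) (hcd : c < d) :
    (c ^ 2 - d') / (c - d) - (a ^ 2 - d') / (a - d) = c - a ↔ d' = d ^ 2 := by
  have hcd' : c - d ≠ 0 := by nlinarith
  have had : a - d ≠ 0 := by nlinarith
  have hac : c - a ≠ 0 := by nlinarith
  rw [div_sub_div _ _ hcd' had, div_eq_iff (mul_ne_zero hcd' had)]
  constructor <;> intro h <;> nlinarith [mul_ne_zero hcd' had, sq_nonneg (c-a)]
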